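/- For the Gerber–Dickson risk process whose claims have support contained in {0,1,…,m} for an integer m ≥ 2 and f(m) > 0, the ruin probability satisfies, for every integer u ≥ m, the order-(m−1) recurrence ψ(u) = ∑_{k=0}^{m−1} F̄(k)·ψ(u−k), where F̄(k) = ∑_{j=k+1}^{m} f(j). -/

import Mathlib

open MeasureTheory ProbabilityTheory

namespace GD
open Filter Finset
set_option linter.unusedSectionVars false
set_option maxHeartbeats 1000000
variable {Ω : Type*} [MeasurableSpace Ω]

/-- ruin set -/
def E (Y : ℕ → Ω → ℕ) (u : ℕ) : Set Ω :=
  {ω | ∃ t : ℕ, 1 ≤ t ∧ (u : ℤ) + t - ∑ j ∈ Finset.range t, (Y j ω : ℤ) ≤ 0}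

/-- ruin by time t -/
def C (Y : ℕ → Ω → ℕ) (u t : ℕ) : Set Ω :=
  {ω | ∃ s : ℕ, 1 ≤ s ∧ s ≤ t ∧ (u : ℤ) + s - ∑ j ∈ Finset.range s, (Y j ω : ℤ) ≤ 0}

def tup (Y : ℕ → Ω → ℕ) (t : ℕ) : Ω → (Fin t → ℕ) := fun ω j => Y j ω

def D (u t : ℕ) : Set (Fin t → ℕ) :=
  {g | ∃ s : ℕ, 1 ≤ s ∧ s ≤ t ∧
    (u : ℤ) + s - ∑ j : Fin t, (if (j : ℕ) < s then (g j : ℤ) else 0) ≤ 0}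

lemma sum_ite_range {M : Type*} [AddCommMonoid M] (F : ℕ → M) (s t : ℕ) (h : s ≤ t) :
    (∑ j : Fin t, if (j : ℕ) < s then F (j : ℕ) else 0) = ∑ j ∈ Finset.range s, F j := by
  rw [Fin.sum_univ_eq_sum_range (fun j => if j < s then F j else 0) t, ← Finset.sum_filter]
  congr 1
  ext j
  simp only [Finset.mem_filter, Finset.mem_range]
  omega

lemma E_eq_iUnion (Y : ℕ → Ω → ℕ) (u : ℕ) : E Y u = ⋃ t, C Y u t := by
  ext ω
  simp only [E, C, Set.mem_setOf_eq, Set.mem_iUnion]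
  exact ⟨fun ⟨t, h1, h2⟩ => ⟨t, t, h1, le_rfl, h2⟩, fun ⟨t, s, h1, h2, h3⟩ => ⟨s, h1, h3⟩⟩

lemma C_mono (Y : ℕ → Ω → ℕ) (u : ℕ) : Monotone (C Y u) := by
  intro a b hab ω ⟨s, h1, h2, h3⟩
  exact ⟨s, h1, h2.trans hab, h3⟩

lemma tup_preimage (Y : ℕ → Ω → ℕ) (u t : ℕ) : tup Y t ⁻¹' D u t = C Y u t := by
  ext ω
  simp only [tup, D, C, Set.mem_preimage, Set.mem_setOf_eq]
  constructor
  · rintro ⟨s, h1, h2, h3⟩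
    refine ⟨s, h1, h2, ?_⟩
    rwa [sum_ite_range (fun j => (Y j ω : ℤ)) s t h2] at h3
  · rintro ⟨s, h1, h2, h3⟩
    refine ⟨s, h1, h2, ?_⟩
    rwa [sum_ite_range (fun j => (Y j ω : ℤ)) s t h2]

lemma tup_measurable (Y : ℕ → Ω → ℕ) (hY : ∀ j, Measurable (Y j)) (t : ℕ) :
    Measurable (tup Y t) :=
  measurable_pi_lambda _ fun j => hY j

lemma S_measurable (Y : ℕ → Ω → ℕ) (hY : ∀ j, Measurable (Y j)) (t : ℕ) :
    Measurable (fun ω => ∑ j ∈ Finset.range t, (Y j ω : ℤ)) :=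
  Finset.measurable_sum _ fun j _ => (measurable_from_nat (f := (Nat.cast : ℕ → ℤ))).comp (hY j)

lemma C_measurable (Y : ℕ → Ω → ℕ) (hY : ∀ j, Measurable (Y j)) (u t : ℕ) :
    MeasurableSet (C Y u t) := by
  have : C Y u t = ⋃ s : ℕ, {ω | 1 ≤ s ∧ s ≤ t} ∩
      ((fun ω => (u : ℤ) + s - ∑ j ∈ Finset.range s, (Y j ω : ℤ)) ⁻¹' (Set.Iic 0)) := by
    ext ω
    simp only [C, Set.mem_setOf_eq, Set.mem_iUnion, Set.mem_inter_iff, Set.mem_preimage,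
      Set.mem_Iic]
    tauto
  rw [this]
  exact MeasurableSet.iUnion fun s => (MeasurableSet.const _).inter
    (((measurable_const.sub (S_measurable Y hY s))) (MeasurableSet.of_discrete (s := Set.Iic (0:ℤ))))

lemma E_measurable (Y : ℕ → Ω → ℕ) (hY : ∀ j, Measurable (Y j)) (u : ℕ) :
    MeasurableSet (E Y u) := by
  rw [E_eq_iUnion]
  exact MeasurableSet.iUnion fun t => C_measurable Y hY u t


section Prob
variable (P : Measure Ω) [IsProbabilityMeasure P] (Y : ℕ → Ω → ℕ)
  (hY : ∀ j, Measurable (Y j))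
  (hindep : iIndepFun Y P)
  (hident : ∀ j, IdentDistrib (Y j) (Y 0) P P)
  (f : ℕ → ℝ)
  (hf : ∀ y, (P {ω | Y 0 ω = y}).toReal = f y)
  (hsummable : Summable (fun y : ℕ => (y : ℝ) * f y))

include hY hindep hident in
lemma rect (t : ℕ) (e : ℕ → ℕ) (he : Function.Injective e) (b : ℕ → ℕ) :
    P (⋂ j ∈ Finset.range t, {ω | Y (e j) ω = b j}) =
      ∏ j ∈ Finset.range t, P {ω | Y 0 ω = b j} := by
  classical
  set binv : ℕ → ℕ := fun i => b (Function.invFun e i) with hbinv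
  have hbe : ∀ j, binv (e j) = b j := fun j => by
    simp [hbinv, Function.leftInverse_invFun he j]
  have h1 : (⋂ j ∈ Finset.range t, {ω | Y (e j) ω = b j}) =
      ⋂ i ∈ (Finset.range t).image e, Y i ⁻¹' {binv i} := by
    ext ω
    simp only [Set.mem_iInter, Finset.mem_image, Finset.mem_range, Set.mem_preimage,
      Set.mem_singleton_iff, Set.mem_setOf_eq]
    constructor
    · rintro H i ⟨j, hj, rfl⟩
      rw [hbe]; exact H j hj
    · intro H j hj
      have := H (e j) ⟨j, hj, rfl⟩
      rwa [hbe] at this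
  rw [h1, hindep.measure_inter_preimage_eq_mul _
    (sets := fun i => {binv i}) (fun i _ => measurableSet_singleton _)]
  rw [Finset.prod_image (fun a _ b _ h => he h)]
  refine Finset.prod_congr rfl fun j hj => ?_
  have := (hident (e j)).measure_mem_eq (s := {binv (e j)}) (measurableSet_singleton _)
  simp only [hbe] at this ⊢
  convert this using 2
  ext ω; simp

include hY hindep hident in
lemma map_tup_apply (t : ℕ) (e : ℕ → ℕ) (he : Function.Injective e) (v : Fin t → ℕ) :
    P ((fun ω (j : Fin t) => Y (e (j : ℕ)) ω) ⁻¹' {v}) =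
      ∏ j ∈ Finset.range t, P {ω | Y 0 ω = if h : j < t then v ⟨j, h⟩ else 0} := by
  rw [← rect P Y hY hindep hident t e he (fun j => if h : j < t then v ⟨j, h⟩ else 0)]
  congr 1
  ext ω
  simp only [Set.mem_preimage, Set.mem_singleton_iff, funext_iff, Set.mem_iInter,
    Finset.mem_range, Set.mem_setOf_eq]
  constructor
  · intro H j hj
    rw [dif_pos hj]; exact H ⟨j, hj⟩
  · intro H j
    have := H (j : ℕ) j.2
    rwa [dif_pos j.2] at this

include hY hindep hident in
lemma map_tup_shift (t : ℕ) :
    Measure.map (tup (fun j => Y (j + 1)) t) P = Measure.map (tup Y t) P := by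
  apply Measure.ext_of_singleton
  intro v
  rw [Measure.map_apply (tup_measurable _ (fun j => hY (j + 1)) t) (measurableSet_singleton v),
      Measure.map_apply (tup_measurable Y hY t) (measurableSet_singleton v)]
  have h1 := map_tup_apply P Y hY hindep hident t (fun j => j + 1)
    (fun a b h => by simpa using h) v
  have h2 := map_tup_apply P Y hY hindep hident t id (fun a b h => h) v
  exact h1.trans h2.symm

include hY hindep hident in
lemma prob_C_shift (u t : ℕ) :
    P (C (fun j => Y (j + 1)) u t) = P (C Y u t) := by
  have hD : MeasurableSet (D u t) := (Set.to_countable (D u t)).measurableSet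
  rw [← tup_preimage, ← tup_preimage,
    ← Measure.map_apply (tup_measurable _ (fun j => hY (j + 1)) t) hD,
    ← Measure.map_apply (tup_measurable Y hY t) hD,
    map_tup_shift P Y hY hindep hident]

lemma prob_E_iSup (Z : ℕ → Ω → ℕ) (u : ℕ) : P (E Z u) = ⨆ t, P (C Z u t) := by
  rw [E_eq_iUnion]
  exact (C_mono Z u).measure_iUnion

include hY hindep hident in
lemma prob_E_shift (u : ℕ) : P (E (fun j => Y (j + 1)) u) = P (E Y u) := by
  rw [prob_E_iSup, prob_E_iSup]
  exact iSup_congr fun t => prob_C_shift P Y hY hindep hident u t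

include hY hindep hident in
lemma indep_tup (t : ℕ) : IndepFun (Y 0) (tup (fun j => Y (j + 1)) t) P := by
  classical
  have hdisj : Disjoint ({0} : Finset ℕ) ((Finset.range t).image (· + 1)) := by
    simp [Finset.disjoint_left]
  have h := hindep.indepFun_finset {0} ((Finset.range t).image (· + 1)) hdisj hY
  have hφ : Measurable (fun w : (({0} : Finset ℕ) → ℕ) => w ⟨0, by simp⟩) :=
    measurable_pi_apply _
  have hψ : Measurable (fun w : ((((Finset.range t).image (· + 1) : Finset ℕ)) → ℕ) =>
      fun j : Fin t => w ⟨(j : ℕ) + 1, Finset.mem_image.mpr ⟨j, Finset.mem_range.mpr j.2, rfl⟩⟩) :=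
    measurable_pi_lambda _ fun j => measurable_pi_apply _
  exact h.comp hφ hψ

include hY hindep hident in
lemma prob_inter_C (y u t : ℕ) :
    P ({ω | Y 0 ω = y} ∩ C (fun j => Y (j + 1)) u t) =
      P {ω | Y 0 ω = y} * P (C (fun j => Y (j + 1)) u t) := by
  have hD : MeasurableSet (D u t) := (Set.to_countable (D u t)).measurableSet
  have h := (indep_tup P Y hY hindep hident t).measure_inter_preimage_eq_mul
    (s := {y}) (t := D u t) (measurableSet_singleton y) hD
  rw [tup_preimage] at h
  have hpre : Y 0 ⁻¹' {y} = {ω | Y 0 ω = y} := by ext ω; simp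
  rwa [hpre] at h

include hY hindep hident in
lemma prob_inter_E (y u : ℕ) :
    P ({ω | Y 0 ω = y} ∩ E (fun j => Y (j + 1)) u) =
      P {ω | Y 0 ω = y} * P (E (fun j => Y (j + 1)) u) := by
  rw [E_eq_iUnion, Set.inter_iUnion]
  have hmono : Monotone (fun t => {ω | Y 0 ω = y} ∩ C (fun j => Y (j + 1)) u t) :=
    fun a b hab => Set.inter_subset_inter_right _ (C_mono _ u hab)
  rw [hmono.measure_iUnion, ← E_eq_iUnion, prob_E_iSup, ENNReal.mul_iSup]
  exact iSup_congr fun t => prob_inter_C P Y hY hindep hident y u t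

lemma subset_E (y v : ℕ) (hyv : v < y) : {ω | Y 0 ω = y} ⊆ E Y v := by
  intro ω hy
  refine ⟨1, le_rfl, ?_⟩
  rw [Finset.sum_range_one, hy]
  push_cast
  omega

lemma E_inter_eq (y v : ℕ) (hyv : y ≤ v) :
    E Y v ∩ {ω | Y 0 ω = y} = E (fun j => Y (j + 1)) (v + 1 - y) ∩ {ω | Y 0 ω = y} := by
  ext ω
  simp only [E, Set.mem_inter_iff, Set.mem_setOf_eq]
  constructor
  · rintro ⟨⟨t, ht1, hle⟩, hy⟩
    refine ⟨?_, hy⟩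
    obtain ⟨t', rfl⟩ : ∃ t', t = t' + 1 := ⟨t - 1, by omega⟩
    rw [Finset.sum_range_succ', hy] at hle
    have ht' : 1 ≤ t' := by
      by_contra h
      have : t' = 0 := by omega
      subst this
      simp only [Finset.range_zero, Finset.sum_empty, zero_add] at hle
      omega
    refine ⟨t', ht', ?_⟩
    generalize hA : (∑ j ∈ Finset.range t', ((Y (j + 1) ω : ℤ))) = A at hle ⊢
    omega
  · rintro ⟨⟨t', ht1, hle⟩, hy⟩
    refine ⟨⟨t' + 1, by omega, ?_⟩, hy⟩
    rw [Finset.sum_range_succ', hy]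
    generalize hA : (∑ j ∈ Finset.range t', ((Y (j + 1) ω : ℤ))) = A at hle ⊢
    omega

include hY in
lemma partition (m v : ℕ) (hm : ∀ y, m < y → P {ω | Y 0 ω = y} = 0) :
    P (E Y v) = ∑ y ∈ Finset.range (m + 1), P (E Y v ∩ {ω | Y 0 ω = y}) := by
  have hdisj : Pairwise (Function.onFun Disjoint fun y => E Y v ∩ {ω | Y 0 ω = y}) := by
    intro a b hab
    simp only [Function.onFun, Set.disjoint_left]
    rintro ω ⟨-, ha⟩ ⟨-, hb⟩
    exact hab (ha.symm.trans hb)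
  have hmeas : ∀ y, MeasurableSet (E Y v ∩ {ω | Y 0 ω = y}) := fun y =>
    (E_measurable Y hY v).inter ((hY 0) (measurableSet_singleton y))
  have hunion : E Y v = ⋃ y : ℕ, (E Y v ∩ {ω | Y 0 ω = y}) := by
    ext ω
    simp only [Set.mem_iUnion, Set.mem_inter_iff, Set.mem_setOf_eq]
    exact ⟨fun h => ⟨Y 0 ω, h, rfl⟩, fun ⟨y, h, _⟩ => h⟩
  have hmu := measure_iUnion (μ := P) hdisj hmeas
  rw [← hunion] at hmu
  rw [hmu]
  refine tsum_eq_sum fun y hy => ?_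
  have : m < y := by simpa using hy
  exact measure_mono_null Set.inter_subset_right (hm y this)

include hY hindep hident in
lemma one_step (m : ℕ) (hm : ∀ y, m < y → P {ω | Y 0 ω = y} = 0) (v : ℕ) :
    P (E Y v) = ∑ y ∈ Finset.range (m + 1),
      P {ω | Y 0 ω = y} * (if y ≤ v then P (E Y (v + 1 - y)) else 1) := by
  rw [partition P Y hY m v hm]
  refine Finset.sum_congr rfl fun y _ => ?_
  by_cases hyv : y ≤ v
  · rw [if_pos hyv, E_inter_eq Y y v hyv, Set.inter_comm,
      prob_inter_E P Y hY hindep hident y (v + 1 - y), prob_E_shift P Y hY hindep hident (v + 1 - y)]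
  · rw [if_neg hyv, mul_one, Set.inter_eq_right.mpr (subset_E Y y v (by omega))]


end Prob

lemma algebra (f ψ : ℕ → ℝ) (m : ℕ) (hm1 : 1 ≤ m)
    (htotal : ∑ y ∈ range (m + 1), f y = 1)
    (hstep : ∀ v, ψ v = ∑ y ∈ range (m + 1), f y * (if y ≤ v then ψ (v + 1 - y) else 1))
    {u : ℕ} (hu : m ≤ u) :
    ψ u = (ψ 0 - ∑ y ∈ range (m + 1), (y : ℝ) * f y)
      + ∑ k ∈ range m, (∑ j ∈ Icc (k + 1) m, f j) * ψ (u - k) := by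
  have hu1 : 1 ≤ u := le_trans hm1 hu
  set Fb : ℕ → ℝ := fun k => ∑ j ∈ Icc (k + 1) m, f j with hFb
  -- Step B+C : inner sums
  have hinner : ∀ y ∈ range (m + 1),
      (∑ v ∈ range u, (if y ≤ v then ψ (v + 1 - y) else 1))
        = (y : ℝ) + ∑ w ∈ Icc 1 u, (if y + w ≤ u then ψ w else 0) := by
    intro y hy
    have hym : y ≤ m := by simpa [Nat.lt_succ_iff] using hy
    have hyu : y ≤ u := le_trans hym hu
    rw [range_eq_Ico, ← Finset.sum_Ico_consecutive _ (Nat.zero_le y) hyu]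
    have h1 : ∑ v ∈ Ico 0 y, (if y ≤ v then ψ (v + 1 - y) else 1) = (y : ℝ) := by
      rw [Finset.sum_congr rfl (fun v hv => if_neg (by simp at hv; omega))]
      simp
    have h2 : ∑ v ∈ Ico y u, (if y ≤ v then ψ (v + 1 - y) else 1)
        = ∑ w ∈ Icc 1 (u - y), ψ w := by
      rw [Finset.sum_congr rfl (fun v hv => if_pos (by simp at hv; omega))]
      refine Finset.sum_bij' (fun v _ => v + 1 - y) (fun w _ => w + y - 1) ?_ ?_ ?_ ?_ ?_
      · intro v hv; simp at hv ⊢; omega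
      · intro w hw; simp at hw ⊢; omega
      · intro v hv; simp at hv ⊢; omega
      · intro w hw; simp at hw ⊢; omega
      · intro v hv; rfl
    have h3 : ∑ w ∈ Icc 1 (u - y), ψ w
        = ∑ w ∈ Icc 1 u, (if y + w ≤ u then ψ w else 0) := by
      have hcong : ∀ w ∈ Icc 1 (u - y), ψ w = (if y + w ≤ u then ψ w else 0) := by
        intro w hw
        simp only [mem_Icc] at hw
        rw [if_pos (by omega)]
      rw [Finset.sum_congr rfl hcong]
      refine Finset.sum_subset (fun w hw => by
        simp only [mem_Icc] at hw ⊢; omega) ?_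
      intro w hw hw'
      simp only [mem_Icc] at hw hw'
      exact if_neg (by omega)
    rw [h1, h2, h3]
  -- Step D : the summed equation
  have hkey : ∑ v ∈ range u, ψ v
      = (∑ y ∈ range (m + 1), (y : ℝ) * f y)
        + ∑ w ∈ Icc 1 u, (1 - Fb (u - w)) * ψ w := by
    calc ∑ v ∈ range u, ψ v
        = ∑ v ∈ range u, ∑ y ∈ range (m + 1), f y * (if y ≤ v then ψ (v + 1 - y) else 1) :=
          Finset.sum_congr rfl fun v _ => hstep v
      _ = ∑ y ∈ range (m + 1), f y * ∑ v ∈ range u, (if y ≤ v then ψ (v + 1 - y) else 1) := by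
          rw [Finset.sum_comm]
          exact Finset.sum_congr rfl fun y _ => (Finset.mul_sum _ _ _).symm
      _ = ∑ y ∈ range (m + 1), f y * ((y : ℝ) + ∑ w ∈ Icc 1 u, (if y + w ≤ u then ψ w else 0)) :=
          Finset.sum_congr rfl fun y hy => by rw [hinner y hy]
      _ = (∑ y ∈ range (m + 1), (y : ℝ) * f y)
          + ∑ y ∈ range (m + 1), ∑ w ∈ Icc 1 u, f y * (if y + w ≤ u then ψ w else 0) := by
          rw [← Finset.sum_add_distrib]
          exact Finset.sum_congr rfl fun y _ => by rw [mul_add, mul_comm (f y) (y : ℝ), Finset.mul_sum]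
      _ = (∑ y ∈ range (m + 1), (y : ℝ) * f y)
          + ∑ w ∈ Icc 1 u, (1 - Fb (u - w)) * ψ w := by
          congr 1
          rw [Finset.sum_comm]
          refine Finset.sum_congr rfl fun w hw => ?_
          simp only [mem_Icc] at hw
          have : ∑ y ∈ range (m + 1), f y * (if y + w ≤ u then ψ w else 0)
              = (∑ y ∈ range (m + 1), (if y + w ≤ u then f y else 0)) * ψ w := by
            rw [Finset.sum_mul]
            refine Finset.sum_congr rfl fun y _ => ?_
            by_cases h : y + w ≤ u <;> simp [h]
          rw [this]
          congr 1
          have hsplit := Finset.sum_filter_add_sum_filter_not (range (m + 1))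
            (fun y => y + w ≤ u) f
          have hflt : filter (fun y => ¬ (y + w ≤ u)) (range (m + 1)) = Icc (u - w + 1) m := by
            ext y; simp only [mem_filter, mem_range, mem_Icc, Nat.lt_succ_iff]; omega
          rw [← Finset.sum_filter, eq_sub_iff_add_eq, ← htotal, ← hsplit, hflt]
  -- assemble
  have hL : ∑ v ∈ range u, ψ v = ψ 0 + ∑ w ∈ Icc 1 (u - 1), ψ w := by
    have h0 : range u = insert 0 (Icc 1 (u - 1)) := by ext v; simp; omega
    rw [h0, Finset.sum_insert (by simp)]
  have hR : ∑ w ∈ Icc 1 u, (1 - Fb (u - w)) * ψ w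
      = (∑ w ∈ Icc 1 (u - 1), ψ w) + ψ u - ∑ w ∈ Icc 1 u, Fb (u - w) * ψ w := by
    have hsub : ∀ w, (1 - Fb (u - w)) * ψ w = ψ w - Fb (u - w) * ψ w := fun w => by ring
    rw [Finset.sum_congr rfl fun w _ => hsub w, Finset.sum_sub_distrib]
    congr 1
    obtain ⟨n, rfl⟩ : ∃ n, u = n + 1 := ⟨u - 1, by omega⟩
    rw [Finset.sum_Icc_succ_top (by omega)]
    simp
  have hB : ∑ w ∈ Icc 1 u, Fb (u - w) * ψ w = ∑ k ∈ range m, Fb k * ψ (u - k) := by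
    have h1 : ∑ w ∈ Icc 1 u, Fb (u - w) * ψ w
        = ∑ j ∈ range u, Fb (u - (1 + j)) * ψ (1 + j) := by
      have : Icc 1 u = Ico 1 (u + 1) := by ext x; simp only [mem_Icc, mem_Ico]; omega
      rw [this, Finset.sum_Ico_eq_sum_range]
      simp only [Nat.add_sub_cancel]
    have h2 : ∑ j ∈ range u, Fb (u - 1 - j) * ψ (u - (u - 1 - j))
        = ∑ k ∈ range u, Fb k * ψ (u - k) :=
      Finset.sum_range_reflect (fun k => Fb k * ψ (u - k)) u
    have h3 : ∑ k ∈ range m, Fb k * ψ (u - k) = ∑ k ∈ range u, Fb k * ψ (u - k) := by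
      refine Finset.sum_subset (Finset.range_subset_range.mpr hu) ?_
      intro k hk hk'
      simp only [mem_range] at hk hk'
      have : Icc (k + 1) m = ∅ := Finset.Icc_eq_empty (by omega)
      simp [hFb, this]
    rw [h1, h3, ← h2]
    refine Finset.sum_congr rfl fun j hj => ?_
    simp only [mem_range] at hj
    have e1 : u - (1 + j) = u - 1 - j := by omega
    have e2 : u - (u - 1 - j) = 1 + j := by omega
    rw [e1, e2]
  rw [hL, hR] at hkey
  rw [← hB]
  linarith [hkey]

lemma E_antitone (Y : ℕ → Ω → ℕ) : Antitone (E Y) := by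
  intro u v huv ω ⟨t, ht, hle⟩
  refine ⟨t, ht, ?_⟩
  have : (u : ℤ) ≤ (v : ℤ) := by exact_mod_cast huv
  omega


section Prob
variable (P : Measure Ω) [IsProbabilityMeasure P] (Y : ℕ → Ω → ℕ)
  (hY : ∀ j, Measurable (Y j))
  (hindep : iIndepFun Y P)
  (hident : ∀ j, IdentDistrib (Y j) (Y 0) P P)
  (f : ℕ → ℝ)
  (hf : ∀ y, (P {ω | Y 0 ω = y}).toReal = f y)
  (hsummable : Summable (fun y : ℕ => (y : ℝ) * f y))

include hf in
lemma singleton_prob (y : ℕ) : P {ω | Y 0 ω = y} = ENNReal.ofReal (f y) := by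
  rw [← hf y, ENNReal.ofReal_toReal (measure_ne_top P _)]

include hf in
lemma f_nonneg (y : ℕ) : 0 ≤ f y := by rw [← hf y]; exact ENNReal.toReal_nonneg

include hY hf hsummable in
lemma integrable_X : Integrable (fun ω => (Y 0 ω : ℝ)) P ∧
    ∫ ω, (Y 0 ω : ℝ) ∂P = ∑' y : ℕ, (y : ℝ) * f y := by
  have hc : Measurable (fun n : ℕ => (n : ℝ)) := measurable_from_nat
  have hmeas : Measurable (fun ω => (Y 0 ω : ℝ)) := hc.comp (hY 0)
  have hlin : ∫⁻ ω, ENNReal.ofReal ((Y 0 ω : ℝ)) ∂P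
      = ENNReal.ofReal (∑' y : ℕ, (y : ℝ) * f y) := by
    have h1 : ∫⁻ ω, ENNReal.ofReal ((Y 0 ω : ℝ)) ∂P
        = ∫⁻ n, ENNReal.ofReal ((n : ℝ)) ∂(P.map (Y 0)) := by
      rw [lintegral_map (measurable_from_nat) (hY 0)]
    rw [h1, lintegral_countable']
    have h2 : ∀ n : ℕ, ENNReal.ofReal ((n : ℝ)) * (P.map (Y 0)) {n}
        = ENNReal.ofReal ((n : ℝ) * f n) := by
      intro n
      rw [Measure.map_apply (hY 0) (measurableSet_singleton n)]
      have : Y 0 ⁻¹' {n} = {ω | Y 0 ω = n} := by ext ω; simp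
      rw [this, singleton_prob P Y f hf n, ← ENNReal.ofReal_mul (by positivity)]
    rw [tsum_congr h2, ← ENNReal.ofReal_tsum_of_nonneg
      (fun n => mul_nonneg (by positivity) (f_nonneg P Y f hf n)) hsummable]
  have hfin : HasFiniteIntegral (fun ω => (Y 0 ω : ℝ)) P := by
    rw [hasFiniteIntegral_iff_ofReal (Eventually.of_forall fun ω => by positivity)]
    rw [hlin]
    exact ENNReal.ofReal_lt_top
  have hint : Integrable (fun ω => (Y 0 ω : ℝ)) P := ⟨hmeas.aestronglyMeasurable, hfin⟩
  refine ⟨hint, ?_⟩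
  rw [integral_eq_lintegral_of_nonneg_ae (Eventually.of_forall fun ω => by positivity)
    hmeas.aestronglyMeasurable, hlin, ENNReal.toReal_ofReal
    (tsum_nonneg fun y => mul_nonneg (by positivity) (f_nonneg P Y f hf y))]

include hY hindep hident hf hsummable in
lemma ae_no_ruin (hnet : ∑' y : ℕ, (y : ℝ) * f y < 1) :
    P (⋂ u : ℕ, E Y u) = 0 := by
  obtain ⟨hint, hmean⟩ := integrable_X P Y hY f hf hsummable
  have hc : Measurable (fun n : ℕ => (n : ℝ)) := measurable_from_nat
  have hpind : Pairwise (Function.onFun (IndepFun · · P) (fun i ω => (Y i ω : ℝ))) := by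
    intro i j hij
    exact (hindep.indepFun hij).comp hc hc
  have hpid : ∀ i, IdentDistrib (fun ω => (Y i ω : ℝ)) (fun ω => (Y 0 ω : ℝ)) P P :=
    fun i => (hident i).comp hc
  have hslln := strong_law_ae_real (fun i ω => (Y i ω : ℝ)) hint hpind hpid
  rw [hmean] at hslln
  have hae : ∀ᵐ ω ∂P, ω ∉ ⋂ u : ℕ, E Y u := by
    filter_upwards [hslln] with ω hω
    have hev := hω.eventually_lt_const hnet
    rw [eventually_atTop] at hev
    obtain ⟨N, hN⟩ := hev
    intro hmem
    simp only [Set.mem_iInter] at hmem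
    -- bound for n ≥ N+1 : sums < n
    have hbound : ∀ n, N + 1 ≤ n → (∑ j ∈ Finset.range n, (Y j ω : ℤ)) < (n : ℤ) := by
      intro n hn
      have h1 := hN n (by omega)
      have hpos : (0 : ℝ) < n := by
        have : 0 < n := by omega
        exact_mod_cast this
      rw [div_lt_one hpos] at h1
      have : ((∑ j ∈ Finset.range n, (Y j ω : ℤ) : ℤ) : ℝ)
          = ∑ i ∈ Finset.range n, ((Y i ω : ℝ)) := by push_cast; rfl
      exact_mod_cast this ▸ (by exact_mod_cast h1 : (∑ i ∈ Finset.range n, ((Y i ω : ℝ))) < (n:ℝ))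
    set u : ℕ := (∑ j ∈ Finset.range (N + 1), Y j ω) + 1 with hu
    obtain ⟨t, ht1, hle⟩ := hmem u
    have hmono : ∀ s t : ℕ, s ≤ t →
        (∑ j ∈ Finset.range s, (Y j ω : ℤ)) ≤ ∑ j ∈ Finset.range t, (Y j ω : ℤ) := by
      intro s t hst
      exact Finset.sum_le_sum_of_subset_of_nonneg (Finset.range_subset_range.mpr hst)
        (fun j _ _ => by positivity)
    by_cases hcase : N + 1 ≤ t
    · have := hbound t hcase
      omega
    · have hst := hmono t (N + 1) (by omega)
      have hcast : ((∑ j ∈ Finset.range (N + 1), Y j ω : ℕ) : ℤ)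
          = ∑ j ∈ Finset.range (N + 1), (Y j ω : ℤ) := by push_cast; rfl
      omega
  have hmeas : MeasurableSet (⋂ u : ℕ, E Y u) :=
    MeasurableSet.iInter fun u => E_measurable Y hY u
  have h0 : P {ω | ¬ ω ∉ ⋂ u : ℕ, E Y u} = 0 := ae_iff.mp hae
  have hset : {ω | ¬ ω ∉ ⋂ u : ℕ, E Y u} = ⋂ u : ℕ, E Y u := by
    ext ω; simp [not_not]
  rwa [hset] at h0


include hY hindep hident hf hsummable in
lemma psi_tendsto_zero (hnet : ∑' y : ℕ, (y : ℝ) * f y < 1)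
    (ψ : ℕ → ℝ) (hψ : ∀ u, ψ u = (P (E Y u)).toReal) :
    Tendsto ψ atTop (nhds 0) := by
  have h1 : Tendsto (fun u => P (E Y u)) atTop (nhds (P (⋂ u : ℕ, E Y u))) :=
    tendsto_measure_iInter_atTop (fun u => (E_measurable Y hY u).nullMeasurableSet)
      (E_antitone Y) ⟨0, measure_ne_top P _⟩
  rw [ae_no_ruin P Y hY hindep hident f hf hsummable hnet] at h1
  have h2 := (ENNReal.tendsto_toReal (a := 0) (by simp)).comp h1
  simp only [ENNReal.toReal_zero] at h2
  have hfe : ψ = fun u => (P (E Y u)).toReal := funext hψ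
  rw [hfe]
  exact h2

include hY hindep hident hf in
lemma one_step_real (m : ℕ) (hsupp : ∀ y, m < y → f y = 0)
    (ψ : ℕ → ℝ) (hψ : ∀ u, ψ u = (P (E Y u)).toReal) (v : ℕ) :
    ψ v = ∑ y ∈ range (m + 1), f y * (if y ≤ v then ψ (v + 1 - y) else 1) := by
  have hP0 : ∀ y, m < y → P {ω | Y 0 ω = y} = 0 := fun y hy => by
    rw [singleton_prob P Y f hf y, hsupp y hy, ENNReal.ofReal_zero]
  have h := one_step P Y hY hindep hident m hP0 v
  rw [hψ v, h, ENNReal.toReal_sum (fun y _ => ENNReal.mul_ne_top (measure_ne_top P _)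
    (by split_ifs; exacts [measure_ne_top P _, ENNReal.one_ne_top]))]
  refine Finset.sum_congr rfl fun y _ => ?_
  rw [ENNReal.toReal_mul, hf y]
  congr 1
  split_ifs
  · exact (hψ _).symm
  · exact ENNReal.toReal_one

include hY hf in
lemma total_real (m : ℕ) (hsupp : ∀ y, m < y → f y = 0) :
    ∑ y ∈ range (m + 1), f y = 1 := by
  have hP0 : ∀ y, m < y → P {ω | Y 0 ω = y} = 0 := fun y hy => by
    rw [singleton_prob P Y f hf y, hsupp y hy, ENNReal.ofReal_zero]
  have hdisj : Pairwise (Function.onFun Disjoint fun y : ℕ => {ω | Y 0 ω = y}) := by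
    intro a b hab
    simp only [Function.onFun, Set.disjoint_left]
    rintro ω ha hb
    exact hab ((ha : Y 0 ω = a).symm.trans hb)
  have hmeas : ∀ y : ℕ, MeasurableSet {ω | Y 0 ω = y} :=
    fun y => (hY 0) (measurableSet_singleton y)
  have hu : (⋃ y : ℕ, {ω | Y 0 ω = y}) = Set.univ := by
    ext ω
    simp only [Set.mem_iUnion, Set.mem_setOf_eq, Set.mem_univ, iff_true]
    exact ⟨Y 0 ω, rfl⟩
  have h1 := measure_iUnion (μ := P) hdisj hmeas
  rw [hu, measure_univ] at h1
  have h2 : (∑' y : ℕ, P {ω | Y 0 ω = y}) = ∑ y ∈ range (m + 1), P {ω | Y 0 ω = y} :=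
    tsum_eq_sum (fun y hy => hP0 y (by simpa using hy))
  rw [h2] at h1
  have h3 := congrArg ENNReal.toReal h1.symm
  rw [ENNReal.toReal_sum (fun y _ => measure_ne_top P _)] at h3
  simpa [hf] using h3

end Prob
end GD

open Finset in
/-- For the Gerber–Dickson risk process with claims supported in `{0,…,m}`, `m ≥ 2`,
`f(m) > 0`, for every `u ≥ m`: `ψ(u) = ∑_{k=0}^{m−1} F̄(k)·ψ(u−k)`,
where `F̄(k) = ∑_{j=k+1}^{m} f(j)`. -/
theorem stmt_5
    {Ω : Type*} [MeasurableSpace Ω] (P : Measure Ω) [IsProbabilityMeasure P]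
    (Y : ℕ → Ω → ℕ) (hYmeas : ∀ j, Measurable (Y j))
    (hindep : iIndepFun Y P)
    (hident : ∀ j, IdentDistrib (Y j) (Y 0) P P)
    (f : ℕ → ℝ)
    (hf : ∀ y, (P {ω | Y 0 ω = y}).toReal = f y)
    (hsummable : Summable (fun y : ℕ => (y : ℝ) * f y))
    (hnet : ∑' y : ℕ, (y : ℝ) * f y < 1)
    (m : ℕ) (hm : 2 ≤ m)
    (hsupp : ∀ y, m < y → f y = 0) (hfm : 0 < f m)
    (ψ : ℕ → ℝ)
    (hψ : ∀ u : ℕ, ψ u = (P {ω | ∃ t : ℕ, 1 ≤ t ∧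
        (u : ℤ) + t - ∑ j ∈ Finset.range t, (Y j ω : ℤ) ≤ 0}).toReal) :
    ∀ u : ℕ, m ≤ u →
      ψ u = ∑ k ∈ Finset.range m, (∑ j ∈ Finset.Icc (k + 1) m, f j) * ψ (u - k) := by
  have hψ' : ∀ u, ψ u = (P (GD.E Y u)).toReal := hψ
  have hstep := GD.one_step_real P Y hYmeas hindep hident f hf m hsupp ψ hψ'
  have htotal := GD.total_real P Y hYmeas f hf m hsupp
  have halg : ∀ u : ℕ, m ≤ u → ψ u = (ψ 0 - ∑ y ∈ range (m + 1), (y : ℝ) * f y)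
      + ∑ k ∈ range m, (∑ j ∈ Icc (k + 1) m, f j) * ψ (u - k) :=
    fun u hu => GD.algebra f ψ m (by omega) htotal hstep hu
  have hmu : ∑ y ∈ range (m + 1), (y : ℝ) * f y = ∑' y : ℕ, (y : ℝ) * f y :=
    (tsum_eq_sum (fun y hy => by rw [hsupp y (by simpa using hy), mul_zero])).symm
  set Cc : ℝ := ψ 0 - ∑ y ∈ range (m + 1), (y : ℝ) * f y with hCcdef
  have h0 : Filter.Tendsto ψ Filter.atTop (nhds 0) :=
    GD.psi_tendsto_zero P Y hYmeas hindep hident f hf hsummable hnet ψ hψ'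
  have hterm : ∀ k : ℕ, Filter.Tendsto (fun u => ψ (u - k)) Filter.atTop (nhds 0) :=
    fun k => h0.comp (Filter.tendsto_sub_atTop_nat k)
  have hsum : Filter.Tendsto
      (fun u => Cc + ∑ k ∈ range m, (∑ j ∈ Icc (k + 1) m, f j) * ψ (u - k))
      Filter.atTop (nhds (Cc + ∑ k ∈ range m, (∑ j ∈ Icc (k + 1) m, f j) * 0)) :=
    tendsto_const_nhds.add (tendsto_finset_sum _ fun k _ => tendsto_const_nhds.mul (hterm k))
  simp only [mul_zero, Finset.sum_const_zero, add_zero] at hsum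
  have hid : ∀ᶠ u in Filter.atTop,
      (fun u => Cc + ∑ k ∈ range m, (∑ j ∈ Icc (k + 1) m, f j) * ψ (u - k)) u = ψ u :=
    Filter.eventually_atTop.mpr ⟨m, fun u hu => (halg u hu).symm⟩
  have hψC : Filter.Tendsto ψ Filter.atTop (nhds Cc) := hsum.congr' hid
  have hCc : Cc = 0 := tendsto_nhds_unique hψC h0
  intro u hu
  rw [halg u hu, hCc, zero_add]
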